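/- Let X be a compact metrizable space, F ⊆ X a closed subset, D² = {z ∈ ℂ : |z| ≤ 1} the closed unit disc, and S¹ = {z ∈ ℂ : |z| = 1} its boundary circle. Let q : D² → X be a continuous surjection that maps the open disc {z : |z| < 1} homeomorphically onto X ∖ F, maps S¹ onto F, and satisfies that q⁻¹(a) is finite for every a ∈ F. Suppose a group G acts by homeomorphisms on D² leaving S¹ invariant, acts by homeomorphisms on X, and q is G-equivariant; if the action of G on X is a convergence group action, then the action of G on D² is a convergence group action. (Paper's Proposition 3.8, 'Lifting convergence groups', stated for the Carathéodory–Torhorst quotient map.) -/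

import Mathlib

open Filter Topology Set

noncomputable section

/-- The group of self-homeomorphisms of a topological space, with `(f * g) x = f (g x)`. -/
instance homeomorphGroup {X : Type*} [TopologicalSpace X] : Group (X ≃ₜ X) where
  mul f g := g.trans f
  one := Homeomorph.refl X
  inv := Homeomorph.symm
  mul_assoc _ _ _ := Homeomorph.ext fun _ => rfl
  one_mul _ := Homeomorph.ext fun _ => rfl
  mul_one _ := Homeomorph.ext fun _ => rfl
  inv_mul_cancel f := Homeomorph.ext fun x => f.symm_apply_apply x

@[simp] theorem homeomorph_mul_apply {X : Type*} [TopologicalSpace X]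
    (f g : X ≃ₜ X) (x : X) : (f * g) x = f (g x) := rfl

@[simp] theorem homeomorph_one_apply {X : Type*} [TopologicalSpace X]
    (x : X) : (1 : X ≃ₜ X) x = x := rfl

/-- The Riemann sphere as a topological space: the one-point compactification of `ℂ`. -/
abbrev S2 : Type := OnePoint ℂ

/-- `f i → ξ` uniformly on compact subsets of the complement of `ζ`. -/
def ConvTo {X : Type*} [TopologicalSpace X] (f : ℕ → X → X) (ζ ξ : X) : Prop :=
  ∀ K : Set X, IsCompact K → ζ ∉ K →
    ∀ U ∈ nhds ξ, ∀ᶠ i in Filter.atTop, ∀ x ∈ K, f i x ∈ U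

variable {G : Type*} [Group G] {X : Type*} [TopologicalSpace X]

/-- A convergence group action. -/
def IsConvergenceAction (ρ : G →* (X ≃ₜ X)) : Prop :=
  ∀ g : ℕ → G, Function.Injective g →
    ∃ n : ℕ → ℕ, StrictMono n ∧ ∃ ζ ξ : X,
      ConvTo (fun i x => ρ (g (n i)) x) ζ ξ

/-- The limit set of an action. -/
def limitSet (ρ : G →* (X ≃ₜ X)) : Set X :=
  {ξ | ∃ (g : ℕ → G) (y : X), Function.Injective g ∧
      Filter.Tendsto (fun i => ρ (g i) y) Filter.atTop (nhds ξ)}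

/-- Conical limit point. -/
def IsConicalLimitPoint (ρ : G →* (X ≃ₜ X)) (ζ : X) : Prop :=
  ∃ (g : ℕ → G) (ξ₀ ξ₁ : X), ξ₀ ≠ ξ₁ ∧
    ConvTo (fun i x => ρ (g i) x) ζ ξ₀ ∧
    Filter.Tendsto (fun i => ρ (g i) ζ) Filter.atTop (nhds ξ₁)

/-- The stabilizer of a point. -/
def ptStab (ρ : G →* (X ≃ₜ X)) (η : X) : Subgroup G where
  carrier := {g | ρ g η = η}
  one_mem' := by simp
  mul_mem' := by
    intro a b ha hb
    simp only [Set.mem_setOf_eq] at *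
    rw [map_mul, homeomorph_mul_apply, hb, ha]
  inv_mem' := by
    intro a ha
    simp only [Set.mem_setOf_eq] at *
    have : ρ a⁻¹ (ρ a η) = η := by
      rw [← homeomorph_mul_apply, ← map_mul, inv_mul_cancel, map_one, homeomorph_one_apply]
    rw [ha] at this
    exact this

/-- The setwise stabilizer of a subset. -/
def setStab (ρ : G →* (X ≃ₜ X)) (C : Set X) : Subgroup G where
  carrier := {g | ∀ x, ρ g x ∈ C ↔ x ∈ C}
  one_mem' := by intro x; simp
  mul_mem' := by
    intro a b ha hb x
    rw [map_mul, homeomorph_mul_apply, ha, hb]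
  inv_mem' := by
    intro a ha x
    have h1 := ha (ρ a⁻¹ x)
    have h2 : ρ a (ρ a⁻¹ x) = x := by
      rw [← homeomorph_mul_apply, ← map_mul, mul_inv_cancel, map_one, homeomorph_one_apply]
    rw [h2] at h1
    exact h1.symm

/-- Bounded parabolic point: stabilizer infinite, acting properly discontinuously
and cocompactly on the complement of the point. -/
def IsBoundedParabolicPoint (ρ : G →* (X ≃ₜ X)) (η : X) : Prop :=
  (ptStab ρ η : Set G).Infinite ∧
  (∀ K : Set X, IsCompact K → K ⊆ {η}ᶜ →
      {g : G | g ∈ ptStab ρ η ∧ ((fun x => ρ g x) '' K ∩ K).Nonempty}.Finite) ∧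
  (∃ K : Set X, IsCompact K ∧ K ⊆ {η}ᶜ ∧
      (⋃ g ∈ ptStab ρ η, (fun x => ρ g x) '' K) = {η}ᶜ)

/-- Geometrically finite convergence group action. -/
def IsGeomFiniteAction (ρ : G →* (X ≃ₜ X)) : Prop :=
  IsConvergenceAction ρ ∧
    ∀ ξ ∈ limitSet ρ, IsConicalLimitPoint ρ ξ ∨ IsBoundedParabolicPoint ρ ξ

/-- Möbius transformation of the Riemann sphere. -/
def IsMobius (f : S2 ≃ₜ S2) : Prop :=
  ∃ a b c d : ℂ, a * d - b * c ≠ 0 ∧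
    ((∀ z : ℂ, c * z + d ≠ 0 →
        f (z : S2) = (((a * z + b) / (c * z + d) : ℂ) : S2)) ∨
     (∀ z : ℂ, c * (starRingEnd ℂ) z + d ≠ 0 →
        f (z : S2) = (((a * (starRingEnd ℂ) z + b) / (c * (starRingEnd ℂ) z + d) : ℂ) : S2)))

/-- Kleinian action: faithful convergence action by Möbius transformations. -/
def IsKleinianAction (ρ : G →* (S2 ≃ₜ S2)) : Prop :=
  Function.Injective ρ ∧ IsConvergenceAction ρ ∧ ∀ g, IsMobius (ρ g)

/-- Geometrically finite Kleinian action. -/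
def IsGFKleinianAction (ρ : G →* (S2 ≃ₜ S2)) : Prop :=
  Function.Injective ρ ∧ IsGeomFiniteAction ρ ∧ ∀ g, IsMobius (ρ g)

/-- The action conjugated by a homeomorphism `h`: `g ↦ h ∘ ρ g ∘ h⁻¹`. -/
def conjAction (ρ : G →* (X ≃ₜ X)) (h : X ≃ₜ X) : G →* (X ≃ₜ X) where
  toFun g := (h.symm.trans (ρ g)).trans h
  map_one' := by
    ext x
    simp [Homeomorph.trans_apply]
  map_mul' := by
    intro a b
    ext x
    simp [Homeomorph.trans_apply, map_mul]

/-- A group is virtually abelian. -/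
def VirtuallyAbelian (H : Type*) [Group H] : Prop :=
  ∃ A : Subgroup H, A.FiniteIndex ∧ ∀ a b : A, a * b = b * a

/-- The standard Sierpiński carpet in `ℝ²`. -/
def sierpinskiCarpet : Set (ℝ × ℝ) :=
  {p | ∃ a b : ℕ → ℕ, (∀ i, a i < 3) ∧ (∀ i, b i < 3) ∧
      p.1 = ∑' i : ℕ, (a i : ℝ) / 3 ^ (i + 1) ∧
      p.2 = ∑' i : ℕ, (b i : ℝ) / 3 ^ (i + 1) ∧
      ∀ i, ¬(a i = 1 ∧ b i = 1)}

/-- `M` contains an embedded Sierpiński carpet. -/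
def ContainsCarpet {Y : Type*} [TopologicalSpace Y] (M : Set Y) : Prop :=
  ∃ f : sierpinskiCarpet → Y, Continuous f ∧ Function.Injective f ∧ ∀ x, f x ∈ M

end

/-- The closed unit disc in `ℂ`. -/
abbrev D2 : Type := ↥(Metric.closedBall (0 : ℂ) 1)

section AuxLifting
open Metric


/-- A convex set containing two distinct points is infinite. -/
lemma convex_infinite {E : Type*} [NormedAddCommGroup E] [NormedSpace ℝ E]
    {C : Set E} (hC : Convex ℝ C) {x y : E} (hx : x ∈ C) (hy : y ∈ C) (hne : x ≠ y) :
    C.Infinite := by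
  have hyx : y - x ≠ 0 := sub_ne_zero.mpr hne.symm
  set f : ℕ → E := fun n => (1 - (1 / (n + 2) : ℝ)) • x + (1 / (n + 2) : ℝ) • y with hf
  have hmem : ∀ n, f n ∈ C := by
    intro n
    have h1 : (0:ℝ) < 1 / (n + 2) := by positivity
    have h2 : (1 / ((n:ℝ) + 2)) ≤ 1 := by
      rw [div_le_one (by positivity)]; linarith
    exact hC hx hy (by linarith) (le_of_lt h1) (by ring)
  have hinj : Function.Injective f := by
    intro n m h
    have key : (1 / ((n:ℝ) + 2)) • (y - x) = (1 / ((m:ℝ) + 2)) • (y - x) := by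
      simp only [hf, sub_smul, one_smul, smul_sub] at h ⊢
      abel_nf at h ⊢
      linear_combination (norm := module) h
    have h4 := smul_left_injective ℝ hyx key
    field_simp at h4
    norm_cast at h4
    omega
  exact Set.infinite_of_injective_forall_mem hinj hmem

/-- Chain lemma. -/
lemma exists_preconnected_compact_superset {T : Type*} [TopologicalSpace T] {Y : Set T}
    (hYc : IsPreconnected Y)
    (HN : ∀ y ∈ Y, ∃ N : Set T, IsCompact N ∧ IsPreconnected N ∧ N ⊆ Y ∧ N ∈ 𝓝 y)
    {y₀ : T} (hy₀ : y₀ ∈ Y) {K : Set T} (hK : IsCompact K) (hKY : K ⊆ Y) :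
    ∃ C : Set T, IsCompact C ∧ IsPreconnected C ∧ K ⊆ C ∧ y₀ ∈ C ∧ C ⊆ Y := by
  choose N hNcomp hNconn hNY hNnhds using HN
  set S : Set T := {y | ∃ C : Set T, IsCompact C ∧ IsPreconnected C ∧ C ⊆ Y ∧ y₀ ∈ C ∧ C ∈ 𝓝 y}
    with hS
  have hSopen : IsOpen S := by
    rw [isOpen_iff_mem_nhds]
    rintro y ⟨C, h1, h2, h3, h4, h5⟩
    filter_upwards [interior_mem_nhds.mpr h5] with z hz
    exact ⟨C, h1, h2, h3, h4, mem_interior_iff_mem_nhds.mp hz⟩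
  have hy₀S : y₀ ∈ S :=
    ⟨N y₀ hy₀, hNcomp _ _, hNconn _ _, hNY _ _, mem_of_mem_nhds (hNnhds _ _), hNnhds _ _⟩
  have hYS : Y ⊆ S := by
    set V : Set T := ⋃ (y : T) (h : y ∈ Y ∧ y ∉ S), interior (N y h.1) with hV
    have hVopen : IsOpen V := isOpen_iUnion fun y => isOpen_iUnion fun _ => isOpen_interior
    have hdisj : Disjoint S V := by
      rw [Set.disjoint_left]
      rintro z hzS hzV
      simp only [hV, Set.mem_iUnion] at hzV
      obtain ⟨y, ⟨hyY, hyS⟩, hz⟩ := hzV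
      obtain ⟨C, h1, h2, h3, h4, h5⟩ := hzS
      refine hyS ⟨C ∪ N y hyY, h1.union (hNcomp _ _), ?_, Set.union_subset h3 (hNY _ _),
        Set.mem_union_left _ h4, Filter.mem_of_superset (hNnhds _ _) Set.subset_union_right⟩
      exact IsPreconnected.union z (mem_of_mem_nhds h5) (interior_subset hz) h2 (hNconn _ _)
    have hcover : Y ⊆ S ∪ V := by
      intro y hy
      by_cases hyS : y ∈ S
      · exact Or.inl hyS
      · refine Or.inr ?_
        simp only [hV, Set.mem_iUnion]
        exact ⟨y, ⟨hy, hyS⟩, mem_interior_iff_mem_nhds.mpr (hNnhds _ _)⟩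
    exact hYc.subset_left_of_subset_union hSopen hVopen hdisj hcover ⟨y₀, hy₀, hy₀S⟩
  -- now cover K
  choose C hCcomp hCconn hCY hCy₀ hCnhds using fun y (hy : y ∈ K) => hYS (hKY hy)
  obtain ⟨t, htcover⟩ := hK.elim_nhds_subcover' (fun y hy => C y hy) (fun y hy => hCnhds y hy)
  have hsU : ⋃₀ (insert (N y₀ hy₀) ((fun (y : ↥K) => C (↑y) y.2) '' (t : Set ↥K)))
      = (⋃ y ∈ t, C ↑y y.2) ∪ N y₀ hy₀ := by
    rw [Set.sUnion_insert, Set.sUnion_image, Set.union_comm]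
    simp
  refine ⟨(⋃ y ∈ t, C ↑y y.2) ∪ N y₀ hy₀, ?_, ?_, ?_,
    Or.inr (mem_of_mem_nhds (hNnhds _ _)), ?_⟩
  · exact ((t.finite_toSet.isCompact_biUnion fun y _ => hCcomp _ _)).union (hNcomp _ _)
  · rw [← hsU]
    apply isPreconnected_sUnion y₀
    · rintro s (rfl | ⟨y, hy, rfl⟩)
      · exact mem_of_mem_nhds (hNnhds _ _)
      · exact hCy₀ _ _
    · rintro s (rfl | ⟨y, hy, rfl⟩)
      · exact hNconn _ _
      · exact hCconn _ _
  · intro z hz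
    exact Or.inl (htcover hz)
  · exact Set.union_subset (Set.iUnion₂_subset fun y hy => hCY _ _) (hNY _ _)


/-- A nonempty preconnected set inside a finite disjoint union of open sets lies in one of them. -/
lemma preconn_subset_of_disjoint {T ι : Type*} [TopologicalSpace T] {s : Set T}
    (hs : IsPreconnected s) (hne : s.Nonempty) {A : Set ι} (hA : A.Finite)
    {U : ι → Set T} (hU : ∀ i ∈ A, IsOpen (U i))
    (hd : ∀ i ∈ A, ∀ j ∈ A, i ≠ j → Disjoint (U i) (U j))
    (hsub : s ⊆ ⋃ i ∈ A, U i) : ∃ i ∈ A, s ⊆ U i := by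
  obtain ⟨x, hx⟩ := hne
  obtain ⟨i₀, hi₀A, hxi₀⟩ := Set.mem_iUnion₂.mp (hsub hx)
  refine ⟨i₀, hi₀A, ?_⟩
  have h1 : IsOpen (⋃ i ∈ A \ {i₀}, U i) :=
    isOpen_biUnion fun i hi => hU i hi.1
  have h2 : Disjoint (U i₀) (⋃ i ∈ A \ {i₀}, U i) := by
    rw [Set.disjoint_iff_inter_eq_empty, Set.inter_iUnion₂]
    simp only [Set.iUnion_eq_empty]
    intro i hi
    exact Set.disjoint_iff_inter_eq_empty.mp (hd i₀ hi₀A i hi.1 (fun h => hi.2 (h ▸ rfl)))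
  have h3 : s ⊆ U i₀ ∪ ⋃ i ∈ A \ {i₀}, U i := by
    intro z hz
    obtain ⟨j, hjA, hzj⟩ := Set.mem_iUnion₂.mp (hsub hz)
    by_cases hj : j = i₀
    · exact Or.inl (hj ▸ hzj)
    · exact Or.inr (Set.mem_biUnion ⟨hjA, hj⟩ hzj)
  exact hs.subset_left_of_subset_union (hU i₀ hi₀A) h1 h2 h3 ⟨x, hx, hxi₀⟩

/-- Every finite set of points admits a radius with pairwise disjoint balls. -/
lemma exists_disjoint_ball_radius {M : Type*} [MetricSpace M] {A : Set M} (hA : A.Finite) :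
    ∃ r : ℝ, 0 < r ∧ ∀ a ∈ A, ∀ b ∈ A, a ≠ b → Disjoint (ball a r) (ball b r) := by
  set D : Set ℝ := (fun p : M × M => dist p.1 p.2) '' ((A ×ˢ A) ∩ {p | p.1 ≠ p.2}) with hD
  have hDfin : D.Finite := ((hA.prod hA).inter_of_left _).image _
  rcases D.eq_empty_or_nonempty with hDe | hDne
  · refine ⟨1, one_pos, fun a ha b hb hab => absurd ?_ (hDe ▸ Set.notMem_empty (dist a b))⟩
    exact ⟨(a, b), ⟨⟨ha, hb⟩, hab⟩, rfl⟩
  · obtain ⟨m, hmD, hmin⟩ := Set.exists_min_image D id hDfin hDne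
    obtain ⟨⟨a, b⟩, ⟨⟨haA, hbA⟩, hab⟩, rfl⟩ := hmD
    have hmpos : 0 < dist a b := dist_pos.mpr hab
    refine ⟨dist a b / 2, by linarith, fun c hc d hd hcd => ?_⟩
    rw [Set.disjoint_left]
    intro z hzc hzd
    rw [mem_ball] at hzc hzd
    have h1 : dist c d ≤ dist z c + dist z d := dist_triangle_left c d z
    have h2 : dist a b ≤ dist c d := hmin _ ⟨(c, d), ⟨⟨hc, hd⟩, hcd⟩, rfl⟩
    linarith

/-- `f i → b` uniformly on compact sets disjoint from `A`. -/
def UnifOff {M : Type*} [TopologicalSpace M] (f : ℕ → M → M) (A : Set M) (b : M) : Prop :=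
  ∀ K : Set M, IsCompact K → Disjoint K A → ∀ U ∈ 𝓝 b,
    ∀ᶠ i in Filter.atTop, ∀ x ∈ K, f i x ∈ U

lemma UnifOff.comp {M : Type*} [TopologicalSpace M] {f : ℕ → M → M} {A : Set M} {b : M}
    (h : UnifOff f A b) {n : ℕ → ℕ} (hn : StrictMono n) : UnifOff (fun i => f (n i)) A b :=
  fun K hK hKA U hU => (hn.tendsto_atTop).eventually (h K hK hKA U hU)

/-- Transfer lemma: push uniform convergence downstairs through `q` to containment upstairs. -/
lemma transfer_lemma {M X : Type*} [TopologicalSpace M] [CompactSpace M]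
    [TopologicalSpace X] [T2Space X]
    {q : M → X} (hq : Continuous q) {φ : ℕ → X → X} {ζ ξ : X}
    (hconv : ∀ K : Set X, IsCompact K → ζ ∉ K → ∀ U ∈ 𝓝 ξ,
      ∀ᶠ i in Filter.atTop, ∀ x ∈ K, φ i x ∈ U)
    {h : ℕ → M → M} (comm : ∀ i x, q (h i x) = φ i (q x))
    {K : Set M} (hK : IsCompact K) (hKZ : Disjoint K (q ⁻¹' {ζ}))
    {U : Set M} (hUo : IsOpen U) (hU : q ⁻¹' {ξ} ⊆ U) :
    ∀ᶠ i in Filter.atTop, ∀ x ∈ K, h i x ∈ U := by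
  have hUc : IsCompact Uᶜ := hUo.isClosed_compl.isCompact
  have hV : IsOpen (q '' Uᶜ)ᶜ := (hUc.image hq).isClosed.isOpen_compl
  have hξV : ξ ∈ (q '' Uᶜ)ᶜ := by
    rintro ⟨x, hxU, hxq⟩
    exact hxU (hU hxq)
  have hζK : ζ ∉ q '' K := by
    rintro ⟨x, hxK, rfl⟩
    exact Set.disjoint_left.mp hKZ hxK rfl
  filter_upwards [hconv (q '' K) (hK.image hq) hζK _ (hV.mem_nhds hξV)] with i hi x hx
  by_contra hxU
  exact hi (q x) (Set.mem_image_of_mem q hx) ⟨h i x, hxU, comm i x⟩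

/-- Step 5: extraction of a subsequence converging locally uniformly off the whole fiber `Z`. -/
lemma step5 {M X : Type*} [MetricSpace M] [CompactSpace M] [TopologicalSpace X] [T2Space X]
    (HM1 : ∀ Z : Set M, Z.Finite → IsPreconnected (Zᶜ))
    (HM2 : ∀ (x : M) (ε : ℝ), 0 < ε →
      ∃ N : Set M, IsCompact N ∧ IsPreconnected N ∧ N ∈ 𝓝 x ∧ N ⊆ closedBall x ε)
    (HM3 : ∀ (x : M) (ε : ℝ), 0 < ε → (closedBall x ε).Infinite)
    {q : M → X} (hq : Continuous q) {h : ℕ → M → M} (hh : ∀ i, Continuous (h i))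
    {φ : ℕ → X → X} (comm : ∀ i x, q (h i x) = φ i (q x)) {ζ ξ : X}
    (hconv : ∀ K : Set X, IsCompact K → ζ ∉ K → ∀ U ∈ 𝓝 ξ,
      ∀ᶠ i in Filter.atTop, ∀ x ∈ K, φ i x ∈ U)
    (hZfin : (q ⁻¹' {ζ}).Finite) (hΞfin : (q ⁻¹' {ξ}).Finite)
    (hΞne : (q ⁻¹' {ξ}).Nonempty) :
    ∃ n : ℕ → ℕ, StrictMono n ∧ ∃ ξ' ∈ q ⁻¹' {ξ},
      UnifOff (fun k => h (n k)) (q ⁻¹' {ζ}) ξ' := by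
  set Z := q ⁻¹' {ζ} with hZ
  set Ξ := q ⁻¹' {ξ} with hΞ
  obtain ⟨r₀, hr₀pos, hr₀⟩ := exists_disjoint_ball_radius hΞfin
  -- Y := Zᶜ is preconnected, with a basepoint y₀
  have hYconn : IsPreconnected (Zᶜ) := HM1 Z hZfin
  obtain ⟨y₀, hy₀⟩ : (Zᶜ : Set M).Nonempty := by
    obtain ⟨w, hw⟩ := hΞne
    exact ((HM3 w 1 one_pos).diff hZfin).nonempty.imp fun z hz => hz.2
  have HN : ∀ y ∈ (Zᶜ : Set M), ∃ N : Set M, IsCompact N ∧ IsPreconnected N ∧ N ⊆ Zᶜ ∧ N ∈ 𝓝 y := by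
    intro y hy
    have hop : IsOpen (Zᶜ : Set M) := hZfin.isClosed.isOpen_compl
    obtain ⟨ε, hεpos, hεsub⟩ := Metric.isOpen_iff.mp hop y hy
    obtain ⟨N, h1, h2, h3, h4⟩ := HM2 y (ε / 2) (by linarith)
    refine ⟨N, h1, h2, fun z hz => hεsub ?_, h3⟩
    have := h4 hz
    rw [mem_closedBall] at this
    rw [mem_ball]
    linarith
  have CC : ∀ K : Set M, IsCompact K → Disjoint K Z →
      ∃ C : Set M, IsCompact C ∧ IsPreconnected C ∧ K ⊆ C ∧ y₀ ∈ C ∧ Disjoint C Z := by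
    intro K hK hKZ
    obtain ⟨C, h1, h2, h3, h4, h5⟩ := exists_preconnected_compact_superset hYconn
      (fun y hy => HN y hy) hy₀ hK (Set.subset_compl_iff_disjoint_right.mpr hKZ)
    exact ⟨C, h1, h2, h3, h4, Set.disjoint_right.mpr fun z hz hzC => h5 hzC hz⟩
  -- the "eventually lands in one ball" statement
  have E : ∀ (C : Set M), IsCompact C → IsPreconnected C → C.Nonempty → Disjoint C Z →
      ∀ ε : ℝ, 0 < ε → ε ≤ r₀ →
      ∀ᶠ i in Filter.atTop, ∃ y ∈ Ξ, ∀ x ∈ C, h i x ∈ ball y ε := by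
    intro C hCcomp hCconn hCne hCZ ε hεpos hεr₀
    have hUo : IsOpen (⋃ y ∈ Ξ, ball y ε) := isOpen_biUnion fun _ _ => isOpen_ball
    have hUsub : Ξ ⊆ ⋃ y ∈ Ξ, ball y ε := fun y hy =>
      Set.mem_biUnion hy (mem_ball_self hεpos)
    filter_upwards [transfer_lemma hq hconv comm hCcomp hCZ hUo hUsub] with i hi
    have himg : (h i '' C) ⊆ ⋃ y ∈ Ξ, ball y ε := by
      rintro - ⟨x, hx, rfl⟩
      exact hi x hx
    obtain ⟨y, hyΞ, hysub⟩ := preconn_subset_of_disjoint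
      (hCconn.image _ (hh i).continuousOn) (hCne.image _) hΞfin
      (fun y _ => isOpen_ball)
      (fun a ha b hb hab => (hr₀ a ha b hb hab).mono (ball_subset_ball hεr₀) (ball_subset_ball hεr₀))
      himg
    exact ⟨y, hyΞ, fun x hx => hysub (Set.mem_image_of_mem _ hx)⟩
  -- pigeonhole on the basepoint
  have hsing : IsCompact ({y₀} : Set M) := isCompact_singleton
  have hsingZ : Disjoint ({y₀} : Set M) Z := Set.disjoint_singleton_left.mpr hy₀
  have E0 : ∀ᶠ i in Filter.atTop, ∃ y ∈ Ξ, h i y₀ ∈ ball y r₀ := by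
    obtain ⟨C, h1, h2, h3, h4, h5⟩ := CC {y₀} hsing hsingZ
    filter_upwards [E C h1 h2 ⟨y₀, h3 rfl⟩ h5 r₀ hr₀pos le_rfl] with i ⟨y, hy, hball⟩
    exact ⟨y, hy, hball y₀ (h3 rfl)⟩
  obtain ⟨ξ', hξ'Ξ, hSinf⟩ : ∃ ξ' ∈ Ξ, {i | h i y₀ ∈ ball ξ' r₀}.Infinite := by
    by_contra hcon
    push_neg at hcon
    have hfin : ({i | ∃ y ∈ Ξ, h i y₀ ∈ ball y r₀}).Finite := by
      have : {i | ∃ y ∈ Ξ, h i y₀ ∈ ball y r₀} ⊆ ⋃ y ∈ Ξ, {i | h i y₀ ∈ ball y r₀} := by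
        rintro i ⟨y, hy, hball⟩
        exact Set.mem_biUnion hy hball
      exact (Set.Finite.biUnion hΞfin fun y hy =>
        hcon y hy).subset this
    obtain ⟨a, ha⟩ := eventually_atTop.mp E0
    exact hfin.not_infinite ((Set.Ici_infinite a).mono fun i hi => ha i hi)
  -- the subsequence
  set n : ℕ → ℕ := Nat.nth (fun i => h i y₀ ∈ ball ξ' r₀) with hn
  have hnmono : StrictMono n := Nat.nth_strictMono hSinf
  have hnmem : ∀ k, h (n k) y₀ ∈ ball ξ' r₀ := fun k => Nat.nth_mem_of_infinite hSinf k
  refine ⟨n, hnmono, ξ', hξ'Ξ, ?_⟩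
  intro K hK hKZ U hU
  obtain ⟨ε, hεpos, hεsub⟩ := Metric.mem_nhds_iff.mp hU
  set ε' := min ε r₀ with hε'
  have hε'pos : 0 < ε' := lt_min hεpos hr₀pos
  obtain ⟨C, h1, h2, h3, h4, h5⟩ := CC K hK hKZ
  have hEv := E C h1 h2 ⟨y₀, h4⟩ h5 ε' hε'pos (min_le_right _ _)
  filter_upwards [hnmono.tendsto_atTop.eventually hEv] with k hk
  obtain ⟨y, hyΞ, hball⟩ := hk
  have hy₀ball : h (n k) y₀ ∈ ball y ε' := hball y₀ h4
  have hyξ' : y = ξ' := by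
    by_contra hne
    exact Set.disjoint_left.mp (hr₀ y hyΞ ξ' hξ'Ξ hne)
      (ball_subset_ball (min_le_right _ _) hy₀ball) (hnmem k)
  intro x hx
  exact hεsub (ball_subset_ball (min_le_left _ _) (hyξ' ▸ hball x (h3 hx)))

/-- Step 6: combining forward and backward uniform convergence off the full fibers
yields convergence off a single point. -/
lemma step6 {M : Type*} [MetricSpace M] [CompactSpace M]
    (HM2 : ∀ (x : M) (ε : ℝ), 0 < ε →
      ∃ N : Set M, IsCompact N ∧ IsPreconnected N ∧ N ∈ 𝓝 x ∧ N ⊆ closedBall x ε)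
    (HM3 : ∀ (x : M) (ε : ℝ), 0 < ε → (closedBall x ε).Infinite)
    (h : ℕ → M ≃ₜ M) {Z Ξ : Set M} (hZfin : Z.Finite) (hΞfin : Ξ.Finite)
    {ζ' ξ' : M} (hξ'Ξ : ξ' ∈ Ξ)
    (P : UnifOff (fun i x => h i x) Z ξ')
    (Q : UnifOff (fun i x => (h i).symm x) Ξ ζ') :
    ∀ K : Set M, IsCompact K → ζ' ∉ K → ∀ U ∈ 𝓝 ξ',
      ∀ᶠ i in Filter.atTop, ∀ x ∈ K, h i x ∈ U := by
  obtain ⟨r₀, hr₀pos, hr₀⟩ := exists_disjoint_ball_radius hΞfin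
  intro K hK hζ'K U hU
  obtain ⟨ε, hεpos, hεsub⟩ := Metric.mem_nhds_iff.mp hU
  set ε' := min ε r₀ with hε'
  have hε'pos : 0 < ε' := lt_min hεpos hr₀pos
  -- for each z ∈ Z \ {ζ'}, an open neighborhood where convergence holds
  have claim : ∀ z ∈ Z, z ≠ ζ' → ∃ O : Set M, IsOpen O ∧ z ∈ O ∧
      ∀ᶠ i in Filter.atTop, ∀ x ∈ O, h i x ∈ ball ξ' ε' := by
    intro z hzZ hzζ'
    set δ := dist z ζ' with hδ
    have hδpos : 0 < δ := dist_pos.mpr hzζ'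
    obtain ⟨N, hNcomp, hNconn, hNnhds, hNsub⟩ := HM2 z (δ / 4) (by linarith)
    -- a point of N outside Z
    obtain ⟨ρ, hρpos, hρsub⟩ := Metric.mem_nhds_iff.mp hNnhds
    obtain ⟨x₀, hx₀⟩ : ((closedBall z (ρ / 2)) \ Z).Nonempty :=
      ((HM3 z (ρ / 2) (by linarith)).diff hZfin).nonempty
    have hx₀N : x₀ ∈ N := hρsub (by
      have := hx₀.1
      rw [mem_closedBall] at this
      rw [mem_ball]
      linarith)
    -- the union of the small balls around Ξ
    set W : Set M := ⋃ y ∈ Ξ, ball y ε' with hW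
    have hWo : IsOpen W := isOpen_biUnion fun _ _ => isOpen_ball
    have hWccomp : IsCompact Wᶜ := hWo.isClosed_compl.isCompact
    have hWcΞ : Disjoint Wᶜ Ξ := by
      rw [Set.disjoint_right]
      intro y hy
      simp only [Set.mem_compl_iff, not_not]
      exact Set.mem_biUnion hy (mem_ball_self hε'pos)
    have hQev := Q Wᶜ hWccomp hWcΞ (ball ζ' (δ / 4)) (ball_mem_nhds _ (by linarith))
    have hPev := P {x₀} isCompact_singleton (Set.disjoint_singleton_left.mpr hx₀.2)
      (ball ξ' ε') (ball_mem_nhds _ hε'pos)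
    refine ⟨interior N, isOpen_interior, mem_interior_iff_mem_nhds.mpr hNnhds, ?_⟩
    filter_upwards [hQev, hPev] with i hQi hPi
    -- h i maps N into W
    have hNW : ∀ x ∈ N, h i x ∈ W := by
      intro x hx
      by_contra hxW
      have := hQi _ hxW
      rw [Homeomorph.symm_apply_apply] at this
      rw [mem_ball] at this
      have hxz : dist x z ≤ δ / 4 := mem_closedBall.mp (hNsub hx)
      have : δ ≤ dist x z + dist x ζ' := dist_triangle_left z ζ' x
      linarith
    -- the image of N is preconnected, lands in one ball
    obtain ⟨y, hyΞ, hysub⟩ := preconn_subset_of_disjoint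
      (hNconn.image _ (h i).continuous.continuousOn)
      ((Set.nonempty_of_mem hx₀N).image _) hΞfin (fun y _ => isOpen_ball)
      (fun a ha b hb hab => (hr₀ a ha b hb hab).mono
        (ball_subset_ball (min_le_right _ _)) (ball_subset_ball (min_le_right _ _)))
      (by rintro - ⟨x, hx, rfl⟩; exact hNW x hx)
    have hx₀ball : h i x₀ ∈ ball y ε' := hysub (Set.mem_image_of_mem _ hx₀N)
    have hyξ' : y = ξ' := by
      by_contra hne
      exact Set.disjoint_left.mp (hr₀ y hyΞ ξ' hξ'Ξ hne)
        (ball_subset_ball (min_le_right _ _) hx₀ball)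
        (ball_subset_ball (min_le_right _ _) (hPi x₀ rfl))
    intro x hx
    exact hyξ' ▸ hysub (Set.mem_image_of_mem _ (interior_subset hx))
  -- choose the neighborhoods
  classical
  choose! O hOopen hOmem hOev using claim
  set Z' : Set M := {z ∈ Z | z ≠ ζ'} with hZ'
  have hZ'fin : Z'.Finite := hZfin.subset (Set.sep_subset _ _)
  set K₁ : Set M := K \ ⋃ z ∈ Z', O z with hK₁
  have hK₁comp : IsCompact K₁ := hK.diff (isOpen_biUnion fun z hz => hOopen z hz.1 hz.2)
  have hK₁Z : Disjoint K₁ Z := by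
    rw [Set.disjoint_left]
    rintro x ⟨hxK, hxO⟩ hxZ
    have hxζ' : x ≠ ζ' := fun h => hζ'K (h ▸ hxK)
    exact hxO (Set.mem_biUnion (⟨hxZ, hxζ'⟩ : x ∈ Z') (hOmem x hxZ hxζ'))
  have hPK₁ := P K₁ hK₁comp hK₁Z (ball ξ' ε') (ball_mem_nhds _ hε'pos)
  have hall : ∀ᶠ i in Filter.atTop, ∀ z ∈ Z', ∀ x ∈ O z, h i x ∈ ball ξ' ε' :=
    (Filter.eventually_all_finite hZ'fin).mpr fun z hz => hOev z hz.1 hz.2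
  filter_upwards [hPK₁, hall] with i h1 h2 x hx
  have : h i x ∈ ball ξ' ε' := by
    by_cases hx₁ : x ∈ K₁
    · exact h1 x hx₁
    · have : x ∈ ⋃ z ∈ Z', O z := by
        by_contra hc
        exact hx₁ ⟨hx, hc⟩
      obtain ⟨z, hz, hxz⟩ := Set.mem_iUnion₂.mp this
      exact h2 z hz x hxz
  exact hεsub (ball_subset_ball (min_le_left _ _) this)

/-- If `φ i → ξ` off `ζ` and the inverses `ψ i → ξ₂` off `ζ₂`, then `ξ₂ = ζ`. -/
lemma inv_limits {X : Type*} [TopologicalSpace X] [T2Space X] [CompactSpace X]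
    (hinf : (Set.univ : Set X).Infinite)
    {φ ψ : ℕ → X → X} (hinvr : ∀ i x, φ i (ψ i x) = x) {ζ ξ ζ₂ ξ₂ : X}
    (h1 : ∀ K : Set X, IsCompact K → ζ ∉ K → ∀ U ∈ 𝓝 ξ,
      ∀ᶠ i in Filter.atTop, ∀ x ∈ K, φ i x ∈ U)
    (h2 : ∀ K : Set X, IsCompact K → ζ₂ ∉ K → ∀ U ∈ 𝓝 ξ₂,
      ∀ᶠ i in Filter.atTop, ∀ x ∈ K, ψ i x ∈ U) :
    ξ₂ = ζ := by
  by_contra hne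
  have key : ∀ x : X, x ≠ ζ₂ → x = ξ := by
    intro x hx
    obtain ⟨U₂, V₂, hU₂o, hV₂o, hξ₂U, hζV, hUV⟩ := t2_separation hne
    obtain ⟨C, hCnhds, hCsub, hCcomp⟩ :=
      local_compact_nhds (x := ξ₂) (n := U₂) (hU₂o.mem_nhds hξ₂U)
    have hζC : ζ ∉ C := fun hζC => Set.disjoint_left.mp hUV (hCsub hζC) hζV
    by_contra hxξ
    have hUξ : {x}ᶜ ∈ 𝓝 ξ := isOpen_compl_singleton.mem_nhds
      (by simp only [Set.mem_compl_iff, Set.mem_singleton_iff]; exact fun h => hxξ h.symm)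
    have hev1 := h1 C hCcomp hζC _ hUξ
    have hev2 := h2 {x} isCompact_singleton
      (by simp only [Set.mem_singleton_iff]; exact fun h => hx h.symm) _ hCnhds
    obtain ⟨i, hi1, hi2⟩ := (hev1.and hev2).exists
    have := hi1 (ψ i x) (hi2 x rfl)
    rw [hinvr] at this
    exact this rfl
  obtain ⟨a, ha⟩ := (hinf.diff (Set.finite_singleton ζ₂)).nonempty
  obtain ⟨b, hb⟩ := ((hinf.diff (Set.finite_singleton ζ₂)).diff (Set.finite_singleton a)).nonempty
  have ha' : a = ξ := key a (by simpa using ha.2)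
  have hb' : b = ξ := key b (by simpa using hb.1.2)
  exact (by simpa using hb.2 : b ≠ a) (hb'.trans ha'.symm)

/-- Nonempty open subsets of `ℂ` are infinite. -/
lemma open_nonempty_infinite {O : Set ℂ} (hO : IsOpen O) (hne : O.Nonempty) : O.Infinite := by
  obtain ⟨y, hy⟩ := hne
  obtain ⟨r, hrpos, hrsub⟩ := Metric.isOpen_iff.mp hO y hy
  refine ((convex_infinite (convex_ball y r) (mem_ball_self hrpos)
    (x := y) (y := y + (r / 2 : ℝ)) ?_ ?_).mono hrsub)
  · rw [mem_ball]
    simp only [dist_eq_norm, add_sub_cancel_left]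
    rw [Complex.norm_real, Real.norm_eq_abs, abs_of_pos (by linarith)]
    linarith
  · intro hcon
    have : ((r / 2 : ℝ) : ℂ) = 0 := by linear_combination -hcon
    rw [Complex.ofReal_eq_zero] at this
    linarith

/-- The complement of a finite set in the closed unit disc (in `ℂ`) is preconnected. -/
lemma closedBall_diff_finite_preconn {s : Set ℂ} (hs : s.Finite) :
    IsPreconnected (Metric.closedBall (0:ℂ) 1 \ s) := by
  -- the open ball minus s is preconnected
  have hball : IsPreconnected (Metric.ball (0:ℂ) 1 \ s) := by
    set e : ℂ ≃ₜ Metric.ball (0:ℂ) 1 := Homeomorph.unitBall with he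
    set f : ℂ → ℂ := fun z => (e z : ℂ) with hf
    have hfc : Continuous f := continuous_subtype_val.comp e.continuous
    have hfinj : Function.Injective f :=
      Subtype.val_injective.comp e.injective
    have hrange : Set.range f = Metric.ball (0:ℂ) 1 := by
      have : Set.range f = Subtype.val '' (Set.range e) := by
        rw [hf, ← Set.range_comp]
        rfl
      rw [this, e.surjective.range_eq, Set.image_univ, Subtype.range_coe]
    have hT : (f ⁻¹' s).Finite := hs.preimage hfinj.injOn
    have hTc : IsPreconnected ((f ⁻¹' s)ᶜ : Set ℂ) := by
      refine (Set.Countable.isPathConnected_compl_of_one_lt_rank ?_ hT.countable).isConnected.2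
      rw [Complex.rank_real_complex]
      exact Cardinal.one_lt_two
    have himg : f '' (f ⁻¹' s)ᶜ = Metric.ball (0:ℂ) 1 \ s := by
      rw [← Set.preimage_compl, Set.image_preimage_eq_inter_range, hrange, Set.inter_comm]
      rfl
    rw [← himg]
    exact hTc.image f hfc.continuousOn
  refine hball.subset_closure (Set.diff_subset_diff_left Metric.ball_subset_closedBall) ?_
  rintro x ⟨hx, hxs⟩
  rw [mem_closure_iff_nhds]
  intro U hU
  obtain ⟨O, hOU, hOo, hxO⟩ := _root_.mem_nhds_iff.mp hU
  have hOb : (O ∩ Metric.ball (0:ℂ) 1).Nonempty := by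
    have hxcb : x ∈ closure (Metric.ball (0:ℂ) 1) := by
      rwa [closure_ball (0:ℂ) one_ne_zero]
    exact mem_closure_iff_nhds.mp hxcb O (hOo.mem_nhds hxO)
  have hinf : (O ∩ Metric.ball (0:ℂ) 1).Infinite :=
    open_nonempty_infinite (hOo.inter Metric.isOpen_ball) hOb
  obtain ⟨z, hz⟩ := (hinf.diff hs).nonempty
  exact ⟨z, hOU hz.1.1, hz.1.2, hz.2⟩

namespace D2Geom

abbrev 𝔻 : Type := ↥(Metric.closedBall (0:ℂ) 1)

instance : CompactSpace 𝔻 :=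
  isCompact_iff_compactSpace.mp (isCompact_closedBall (0:ℂ) 1)

lemma closedBall_eq_preimage (x : 𝔻) (ε : ℝ) :
    (Metric.closedBall x ε : Set 𝔻) = Subtype.val ⁻¹' (Metric.closedBall (x : ℂ) ε) := by
  ext y
  simp only [Metric.mem_closedBall, Set.mem_preimage, Subtype.dist_eq]

lemma hm1 : ∀ Z : Set 𝔻, Z.Finite → IsPreconnected (Zᶜ : Set 𝔻) := by
  intro Z hZ
  rw [← IsInducing.subtypeVal.isPreconnected_image]
  have h1 : (Subtype.val '' (Zᶜ : Set 𝔻)) = Metric.closedBall (0:ℂ) 1 \ (Subtype.val '' Z) := by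
    ext z
    constructor
    · rintro ⟨w, hw, rfl⟩
      exact ⟨w.2, fun ⟨v, hv, hvw⟩ => hw ((Subtype.val_injective hvw) ▸ hv)⟩
    · rintro ⟨hz, hzZ⟩
      exact ⟨⟨z, hz⟩, fun hmem => hzZ ⟨⟨z, hz⟩, hmem, rfl⟩, rfl⟩
  rw [h1]
  exact closedBall_diff_finite_preconn (hZ.image _)

lemma hm2 : ∀ (x : 𝔻) (ε : ℝ), 0 < ε →
    ∃ N : Set 𝔻, IsCompact N ∧ IsPreconnected N ∧ N ∈ 𝓝 x ∧ N ⊆ Metric.closedBall x ε := by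
  intro x ε hε
  refine ⟨Metric.closedBall x ε, ?_, ?_, Metric.closedBall_mem_nhds x hε, subset_rfl⟩
  · exact Metric.isClosed_closedBall.isCompact
  · rw [← IsInducing.subtypeVal.isPreconnected_image]
    have h1 : Subtype.val '' (Metric.closedBall x ε : Set 𝔻)
        = Metric.closedBall (x:ℂ) ε ∩ Metric.closedBall (0:ℂ) 1 := by
      rw [closedBall_eq_preimage, Set.image_preimage_eq_inter_range, Subtype.range_coe]
    rw [h1]
    exact ((convex_closedBall _ _).inter (convex_closedBall _ _)).isPreconnected

lemma hm3 : ∀ (x : 𝔻) (ε : ℝ), 0 < ε → (Metric.closedBall x ε : Set 𝔻).Infinite := by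
  intro x ε hε
  set C : Set ℂ := Metric.closedBall (x:ℂ) ε ∩ Metric.closedBall (0:ℂ) 1 with hC
  have hxC : (x:ℂ) ∈ C := ⟨Metric.mem_closedBall_self (le_of_lt hε), x.2⟩
  obtain ⟨y, hyC, hyx⟩ : ∃ y, y ∈ C ∧ y ≠ (x:ℂ) := by
    by_cases hx0 : (x:ℂ) = 0
    · refine ⟨((min ε 1) / 2 : ℝ), ⟨?_, ?_⟩, ?_⟩
      · rw [Metric.mem_closedBall, hx0, dist_zero_right, Complex.norm_real, Real.norm_eq_abs,
          abs_of_pos (by positivity)]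
        calc min ε 1 / 2 ≤ ε / 2 := by have := min_le_left ε 1; linarith
          _ ≤ ε := by linarith
      · rw [Metric.mem_closedBall, dist_zero_right, Complex.norm_real, Real.norm_eq_abs,
          abs_of_pos (by positivity)]
        have := min_le_right ε 1; linarith
      · rw [hx0]
        intro hcon
        rw [Complex.ofReal_eq_zero] at hcon
        have : min ε 1 > 0 := lt_min hε one_pos
        linarith
    · have hxn : 0 < ‖(x:ℂ)‖ := norm_pos_iff.mpr hx0
      set t : ℝ := min (ε / ‖(x:ℂ)‖) 1 with ht
      have htpos : 0 < t := lt_min (by positivity) one_pos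
      have ht1 : t ≤ 1 := min_le_right _ _
      refine ⟨(1 - t) • (x:ℂ), ⟨?_, ?_⟩, ?_⟩
      · rw [Metric.mem_closedBall, dist_eq_norm]
        have : (1 - t) • (x:ℂ) - x = (-t) • (x:ℂ) := by
          rw [sub_smul, one_smul, neg_smul]; ring
        rw [this, norm_smul, Real.norm_eq_abs, abs_neg, abs_of_pos htpos]
        calc t * ‖(x:ℂ)‖ ≤ (ε / ‖(x:ℂ)‖) * ‖(x:ℂ)‖ := by
              apply mul_le_mul_of_nonneg_right (min_le_left _ _) (le_of_lt hxn)
          _ = ε := div_mul_cancel₀ ε (ne_of_gt hxn)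
      · rw [Metric.mem_closedBall, dist_zero_right, norm_smul, Real.norm_eq_abs,
          abs_of_nonneg (by linarith)]
        have hx1 : ‖(x:ℂ)‖ ≤ 1 := by
          have := x.2
          rwa [Metric.mem_closedBall, dist_zero_right] at this
        calc (1 - t) * ‖(x:ℂ)‖ ≤ 1 * ‖(x:ℂ)‖ :=
              mul_le_mul_of_nonneg_right (by linarith) (norm_nonneg _)
          _ ≤ 1 := by rw [one_mul]; exact hx1
      · intro hcon
        have : (1 - t) • (x:ℂ) - (x:ℂ) = 0 := by rw [hcon, sub_self]
        rw [sub_smul, one_smul] at this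
        have : t • (x:ℂ) = 0 := by linear_combination -this
        rcases smul_eq_zero.mp this with h | h
        · linarith
        · exact hx0 h
  have hCinf : C.Infinite :=
    convex_infinite ((convex_closedBall _ _).inter (convex_closedBall _ _)) hxC hyC hyx.symm
  have : (Subtype.val ⁻¹' C : Set 𝔻).Infinite :=
    hCinf.preimage (by rw [Subtype.range_coe]; exact Set.inter_subset_right)
  refine this.mono ?_
  rw [closedBall_eq_preimage]
  exact fun z hz => hz.1

end D2Geom

end AuxLifting

/-- **Proposition 3.8 (Lifting convergence groups).**
Let `q : D² → X` be a continuous surjection onto a compact metrizable space `X`, mapping the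
open disc homeomorphically onto `X ∖ F` (with `F ⊆ X` closed), mapping the boundary circle onto
`F`, and with finite fibers over `F`.  If `G` acts equivariantly by homeomorphisms on `D²`
(leaving `S¹` invariant) and on `X`, and the action on `X` is a convergence group action, then
the action on `D²` is a convergence group action. -/
theorem lifting_convergence_groups {G : Type*} [Group G]
    {X : Type*} [TopologicalSpace X] [CompactSpace X] [TopologicalSpace.MetrizableSpace X]
    (F : Set X) (hF : IsClosed F)
    (ρD : G →* (D2 ≃ₜ D2)) (ρX : G →* (X ≃ₜ X))
    (q : D2 → X)
    (hqcont : Continuous q) (hqsurj : Function.Surjective q)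
    (hhomeo : ∃ e : ↥{z : D2 | ‖(↑z : ℂ)‖ < 1} ≃ₜ ↥(Fᶜ),
        ∀ z : ↥{z : D2 | ‖(↑z : ℂ)‖ < 1}, (e z : X) = q ↑z)
    (hS1 : q '' {z : D2 | ‖(↑z : ℂ)‖ = 1} = F)
    (hfib : ∀ a ∈ F, (q ⁻¹' {a}).Finite)
    (hS1inv : ∀ (g : G) (z : D2), ‖(↑z : ℂ)‖ = 1 → ‖(↑(ρD g z) : ℂ)‖ = 1)
    (hequiv : ∀ (g : G) (z : D2), q (ρD g z) = ρX g (q z))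
    (hconvX : IsConvergenceAction ρX) :
    IsConvergenceAction ρD := by
  classical
  intro g hg
  obtain ⟨e, he⟩ := hhomeo
  -- `q` is injective on the open disc
  have hqinj : ∀ z w : D2, ‖(↑z : ℂ)‖ < 1 → ‖(↑w : ℂ)‖ < 1 → q z = q w → z = w := by
    intro z w hz hw hqzw
    have h1 : e ⟨z, hz⟩ = e ⟨w, hw⟩ := Subtype.ext (by rw [he ⟨z, hz⟩, he ⟨w, hw⟩]; exact hqzw)
    exact congrArg Subtype.val (e.injective h1)
  have hbd : ∀ z : D2, ‖(↑z : ℂ)‖ = 1 → q z ∈ F := by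
    intro z hz
    rw [← hS1]
    exact ⟨z, hz, rfl⟩
  have habs : ∀ z : D2, ‖(↑z : ℂ)‖ ≤ 1 := by
    intro z
    have h2 := z.2
    rw [Metric.mem_closedBall, dist_zero_right] at h2
    exact h2
  -- all fibers of `q` are finite
  have hfib' : ∀ a : X, (q ⁻¹' {a}).Finite := by
    intro a
    by_cases haF : a ∈ F
    · exact hfib a haF
    · apply Set.Subsingleton.finite
      intro z hz w hw
      rw [Set.mem_preimage, Set.mem_singleton_iff] at hz hw
      have hz1 : ‖(↑z : ℂ)‖ < 1 :=
        lt_of_le_of_ne (habs z) fun h => haF (hz ▸ hbd z h)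
      have hw1 : ‖(↑w : ℂ)‖ < 1 :=
        lt_of_le_of_ne (habs w) fun h => haF (hw ▸ hbd w h)
      exact hqinj z w hz1 hw1 (hz.trans hw.symm)
  -- `X` is infinite
  have hXinf : (Set.univ : Set X).Infinite := by
    have hmem : ∀ n : ℕ, ((1/(n+2 : ℝ) : ℝ) : ℂ) ∈ Metric.closedBall (0:ℂ) 1 := by
      intro n
      rw [Metric.mem_closedBall, dist_zero_right, Complex.norm_real, Real.norm_eq_abs,
        abs_of_pos (by positivity)]
      rw [div_le_one (by positivity)]
      linarith
    set pt : ℕ → D2 := fun n => ⟨((1/(n+2 : ℝ) : ℝ) : ℂ), hmem n⟩ with hpt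
    have habspt : ∀ n : ℕ, ‖(↑(pt n) : ℂ)‖ < 1 := by
      intro n
      simp only [hpt, Complex.norm_real, Real.norm_eq_abs, abs_of_pos (show (0:ℝ) < 1/(n+2 : ℝ) by positivity)]
      rw [div_lt_one (by positivity)]
      linarith
    apply Set.infinite_of_injective_forall_mem (f := fun n => q (pt n))
      (fun n m h => ?_) (fun n => Set.mem_univ _)
    have h2 := hqinj (pt n) (pt m) (habspt n) (habspt m) h
    have h3 : ((1/(n+2 : ℝ) : ℝ) : ℂ) = ((1/(m+2 : ℝ) : ℝ) : ℂ) := congrArg Subtype.val h2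
    rw [Complex.ofReal_inj] at h3
    field_simp at h3
    norm_cast at h3
    omega
  -- convergence on `X` along a subsequence, both forward and backward
  obtain ⟨n₁, hn₁, ζ, ξ, hA⟩ := hconvX g hg
  obtain ⟨n₂, hn₂, ζ₂, ξ₂, hB⟩ := hconvX (fun i => (g (n₁ i))⁻¹)
    (fun i j h => hn₁.injective (hg (inv_injective h)))
  have hA' : ConvTo (fun i x => ρX (g (n₁ (n₂ i))) x) ζ ξ :=
    fun K hK hζ U hU => hn₂.tendsto_atTop.eventually (hA K hK hζ U hU)
  have hinv1 : ∀ (a : G) (x : X), ρX a (ρX a⁻¹ x) = x := by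
    intro a x
    rw [← homeomorph_mul_apply, ← map_mul, mul_inv_cancel, map_one, homeomorph_one_apply]
  have hinv2 : ∀ (a : G) (x : X), ρX a⁻¹ (ρX a x) = x := by
    intro a x
    rw [← homeomorph_mul_apply, ← map_mul, inv_mul_cancel, map_one, homeomorph_one_apply]
  have hξ₂ : ξ₂ = ζ := inv_limits hXinf (fun i x => hinv1 (g (n₁ (n₂ i))) x) hA' hB
  have hζ₂ : ζ₂ = ξ :=
    (inv_limits hXinf (fun i x => hinv2 (g (n₁ (n₂ i))) x) hB hA').symm
  have hcommInv : ∀ (a : G) (x : D2), q ((ρD a).symm x) = ρX a⁻¹ (q x) := by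
    intro a x
    have h1 : (ρD a).symm x = ρD a⁻¹ x := by rw [map_inv]; rfl
    rw [h1]
    exact hequiv _ x
  -- step 5, forward
  obtain ⟨n₃, hn₃, ξ', hξ'Ξ, hP⟩ := step5 D2Geom.hm1 D2Geom.hm2 D2Geom.hm3 hqcont
    (h := fun i => (ρD (g (n₁ (n₂ i))) : D2 → D2)) (fun i => (ρD _).continuous)
    (φ := fun i x => ρX (g (n₁ (n₂ i))) x) (fun i x => hequiv _ x) hA'
    (hfib' ζ) (hfib' ξ)
    (by obtain ⟨z, hz⟩ := hqsurj ξ; exact ⟨z, by simp [hz]⟩)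
  have hB' : ConvTo (fun i x => ρX ((g (n₁ (n₂ (n₃ i))))⁻¹) x) ξ ζ := by
    rw [← hζ₂, ← hξ₂]
    exact fun K hK hζc U hU => hn₃.tendsto_atTop.eventually (hB K hK hζc U hU)
  -- step 5, backward
  obtain ⟨n₄, hn₄, ζ', hζ'Z, hQ⟩ := step5 D2Geom.hm1 D2Geom.hm2 D2Geom.hm3 hqcont
    (h := fun i => ((ρD (g (n₁ (n₂ (n₃ i))))).symm : D2 → D2))
    (fun i => (Homeomorph.continuous _))
    (φ := fun i x => ρX ((g (n₁ (n₂ (n₃ i))))⁻¹) x) (fun i x => hcommInv _ x) hB'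
    (hfib' ξ) (hfib' ζ)
    (by obtain ⟨z, hz⟩ := hqsurj ζ; exact ⟨z, by simp [hz]⟩)
  refine ⟨fun k => n₁ (n₂ (n₃ (n₄ k))), hn₁.comp (hn₂.comp (hn₃.comp hn₄)), ζ', ξ', ?_⟩
  intro K hK hζ'K U hU
  have hPfinal : UnifOff (fun k x => ρD (g (n₁ (n₂ (n₃ (n₄ k))))) x) (q ⁻¹' {ζ}) ξ' :=
    hP.comp hn₄
  have hQfinal : UnifOff (fun k x => (ρD (g (n₁ (n₂ (n₃ (n₄ k)))))).symm x) (q ⁻¹' {ξ}) ζ' := hQ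
  exact step6 D2Geom.hm2 D2Geom.hm3 (fun k => ρD (g (n₁ (n₂ (n₃ (n₄ k))))))
    (hfib' ζ) (hfib' ξ) hξ'Ξ hPfinal hQfinal K hK hζ'K U hU
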